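/- If t is a hereditarily defined term of the lambda calculus with constructors and ⌈t⌉ →* t', then cnf(t') = ⌈t₀⌉ for some term t₀ with t →* t₀. -/

import Mathlib

/- Terms of the lambda calculus with `n` constructors (de Bruijn indices).
`Ob n` plays the role of `Option (Tm n)`: a case-binding is a partial map
`Fin n → Ob n` from constructors to terms. -/
mutual
inductive Tm (n : ℕ) : Type where
  | var : ℕ → Tm n
  | app : Tm n → Tm n → Tm n
  | lam : Tm n → Tm n
  | cst : Fin n → Tm n
  | cas : (Fin n → Ob n) → Tm n → Tm n
inductive Ob (n : ℕ) : Type where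
  | none : Ob n
  | some : Tm n → Ob n
end

namespace LC

variable {n : ℕ}

/- Shift free de Bruijn indices `≥ k` by `d`. -/
mutual
def lift (d k : ℕ) : Tm n → Tm n
  | .var i => .var (if i < k then i else i + d)
  | .app t u => .app (lift d k t) (lift d k u)
  | .lam t => .lam (lift d (k+1) t)
  | .cst c => .cst c
  | .cas θ t => .cas (fun c => liftO d k (θ c)) (lift d k t)
def liftO (d k : ℕ) : Ob n → Ob n
  | .none => .none
  | .some t => .some (lift d k t)
end

/- Lift a case-binding (used for the CaseLam rule, where the bound variable
must not occur free in the binding). -/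
def liftB (θ : Fin n → Ob n) : Fin n → Ob n := fun c => liftO 1 0 (θ c)

/- Substitution of `u` for the variable `k` (capture-avoiding). -/
mutual
def subst (u : Tm n) (k : ℕ) : Tm n → Tm n
  | .var i => if i < k then .var i else if i = k then lift k 0 u else .var (i-1)
  | .app t v => .app (subst u k t) (subst u k v)
  | .lam t => .lam (subst u (k+1) t)
  | .cst c => .cst c
  | .cas θ t => .cas (fun c => substO u k (θ c)) (subst u k t)
def substO (u : Tm n) (k : ℕ) : Ob n → Ob n
  | .none => .none
  | .some t => .some (subst u k t)
end

/- `{θ}·(-)` applied inside an optional branch. -/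
def casO (θ : Fin n → Ob n) : Ob n → Ob n
  | .none => .none
  | .some u => .some (.cas θ u)

/- Composition of case-bindings: `(θ∘φ)(c) = {θ}·φ(c)` for `c ∈ dom φ`. -/
def compB (θ φ : Fin n → Ob n) : Fin n → Ob n := fun c => casO θ (φ c)

/- One-step reduction of the lambda calculus with constructors:
AppLam, LamApp, CaseCons, CaseApp, CaseLam, CaseCase, closed under all contexts. -/
inductive Step : Tm n → Tm n → Prop where
  | appLam (t u : Tm n) : Step (.app (.lam t) u) (subst u 0 t)
  | lamApp (t : Tm n) : Step (.lam (.app (lift 1 0 t) (.var 0))) t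
  | caseCons (θ : Fin n → Ob n) (c : Fin n) (u : Tm n) :
      θ c = .some u → Step (.cas θ (.cst c)) u
  | caseApp (θ : Fin n → Ob n) (t u : Tm n) :
      Step (.cas θ (.app t u)) (.app (.cas θ t) u)
  | caseLam (θ : Fin n → Ob n) (t : Tm n) :
      Step (.cas θ (.lam t)) (.lam (.cas (liftB θ) t))
  | caseCase (θ φ : Fin n → Ob n) (t : Tm n) :
      Step (.cas θ (.cas φ t)) (.cas (compB θ φ) t)
  | appL {t t' : Tm n} (u : Tm n) : Step t t' → Step (.app t u) (.app t' u)
  | appR (t : Tm n) {u u' : Tm n} : Step u u' → Step (.app t u) (.app t u')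
  | lamC {t t' : Tm n} : Step t t' → Step (.lam t) (.lam t')
  | casT (θ : Fin n → Ob n) {t t' : Tm n} : Step t t' → Step (.cas θ t) (.cas θ t')
  | casB (θ : Fin n → Ob n) (c : Fin n) {u u' : Tm n} (t : Tm n) :
      θ c = .some u → Step u u' →
      Step (.cas θ t) (.cas (Function.update θ c (.some u')) t)

/- One-step reduction by the CaseCase rule only (closed under all contexts). -/
inductive StepCC : Tm n → Tm n → Prop where
  | caseCase (θ φ : Fin n → Ob n) (t : Tm n) :
      StepCC (.cas θ (.cas φ t)) (.cas (compB θ φ) t)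
  | appL {t t' : Tm n} (u : Tm n) : StepCC t t' → StepCC (.app t u) (.app t' u)
  | appR (t : Tm n) {u u' : Tm n} : StepCC u u' → StepCC (.app t u) (.app t u')
  | lamC {t t' : Tm n} : StepCC t t' → StepCC (.lam t) (.lam t')
  | casT (θ : Fin n → Ob n) {t t' : Tm n} : StepCC t t' → StepCC (.cas θ t) (.cas θ t')
  | casB (θ : Fin n → Ob n) (c : Fin n) {u u' : Tm n} (t : Tm n) :
      θ c = .some u → StepCC u u' →
      StepCC (.cas θ t) (.cas (Function.update θ c (.some u')) t)

/- One-step reduction λC⁻ : every rule except CaseCase (closed under all contexts). -/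
inductive StepM : Tm n → Tm n → Prop where
  | appLam (t u : Tm n) : StepM (.app (.lam t) u) (subst u 0 t)
  | lamApp (t : Tm n) : StepM (.lam (.app (lift 1 0 t) (.var 0))) t
  | caseCons (θ : Fin n → Ob n) (c : Fin n) (u : Tm n) :
      θ c = .some u → StepM (.cas θ (.cst c)) u
  | caseApp (θ : Fin n → Ob n) (t u : Tm n) :
      StepM (.cas θ (.app t u)) (.app (.cas θ t) u)
  | caseLam (θ : Fin n → Ob n) (t : Tm n) :
      StepM (.cas θ (.lam t)) (.lam (.cas (liftB θ) t))
  | appL {t t' : Tm n} (u : Tm n) : StepM t t' → StepM (.app t u) (.app t' u)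
  | appR (t : Tm n) {u u' : Tm n} : StepM u u' → StepM (.app t u) (.app t u')
  | lamC {t t' : Tm n} : StepM t t' → StepM (.lam t) (.lam t')
  | casT (θ : Fin n → Ob n) {t t' : Tm n} : StepM t t' → StepM (.cas θ t) (.cas θ t')
  | casB (θ : Fin n → Ob n) (c : Fin n) {u u' : Tm n} (t : Tm n) :
      θ c = .some u → StepM u u' →
      StepM (.cas θ t) (.cas (Function.update θ c (.some u')) t)

/- A term is defined when none of its subterms is a match failure `{θ}·c` with
`c ∉ dom θ`. -/
inductive Defined : Tm n → Prop where
  | var (i : ℕ) : Defined (.var i)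
  | cst (c : Fin n) : Defined (.cst c)
  | app {t u : Tm n} : Defined t → Defined u → Defined (.app t u)
  | lam {t : Tm n} : Defined t → Defined (.lam t)
  | cas {θ : Fin n → Ob n} {t : Tm n} :
      (∀ c u, θ c = .some u → Defined u) → Defined t →
      (∀ c, t = .cst c → θ c ≠ .none) → Defined (.cas θ t)

/- Hereditarily defined: every reduct (in any number of steps) is defined. -/
def HD (t : Tm n) : Prop := ∀ u, Relation.ReflTransGen Step t u → Defined u

section Completion
variable [NeZero n]

/- The canonical match failure `{}·c₁` used to fill missing branches. -/
def failTm : Tm n := .cas (fun _ => .none) (.cst 0)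

/- Case-completion: replace every case-binding by its total completion,
filling each missing branch with `{}·c₁`. -/
mutual
def cpl : Tm n → Tm n
  | .var i => .var i
  | .app t u => .app (cpl t) (cpl u)
  | .lam t => .lam (cpl t)
  | .cst c => .cst c
  | .cas θ t => .cas (fun c => .some (cplO (θ c))) (cpl t)
def cplO : Ob n → Tm n
  | .none => failTm
  | .some u => cpl u
end

end Completion

/- The structural measure μ. -/
mutual
def mes : Tm n → ℕ
  | .var _ => 1
  | .cst _ => 1
  | .lam t => mes t + 1
  | .app t u => mes t + mes u
  | .cas θ t => mes t * ((∑ c : Fin n, mesO (θ c)) + 2)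
def mesO : Ob n → ℕ
  | .none => 0
  | .some t => mes t
end

end LC

namespace LC

set_option linter.unusedSectionVars false

open Relation

variable {n : ℕ}

theorem stepCC_step {x y : Tm n} (h : StepCC x y) : Step x y := by
  induction h with
  | caseCase θ φ t => exact Step.caseCase θ φ t
  | appL u _ ih => exact Step.appL u ih
  | appR t _ ih => exact Step.appR t ih
  | lamC _ ih => exact Step.lamC ih
  | casT θ _ ih => exact Step.casT θ ih
  | casB θ c t hc _ ih => exact Step.casB θ c t hc ih

theorem star_casT (θ : Fin n → Ob n) {t t' : Tm n} (h : ReflTransGen Step t t') :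
    ReflTransGen Step (.cas θ t) (.cas θ t') :=
  h.lift (fun s => Tm.cas θ s) (fun _ _ hs => Step.casT θ hs)

theorem star_appL {t t' : Tm n} (u : Tm n) (h : ReflTransGen Step t t') :
    ReflTransGen Step (.app t u) (.app t' u) :=
  h.lift (fun s => Tm.app s u) (fun _ _ hs => Step.appL u hs)

theorem star_appR (t : Tm n) {u u' : Tm n} (h : ReflTransGen Step u u') :
    ReflTransGen Step (.app t u) (.app t u') :=
  h.lift (fun s => Tm.app t s) (fun _ _ hs => Step.appR t hs)

theorem star_lam {t t' : Tm n} (h : ReflTransGen Step t t') :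
    ReflTransGen Step (.lam t) (.lam t') :=
  h.lift (fun s => Tm.lam s) (fun _ _ hs => Step.lamC hs)

theorem steps_casB {V V₁ : Tm n} (S : Tm n) (h : ReflTransGen Step V V₁) :
    ∀ (Θ : Fin n → Ob n) (c : Fin n), Θ c = .some V →
    ReflTransGen Step (.cas Θ S) (.cas (Function.update Θ c (.some V₁)) S) := by
  induction h using Relation.ReflTransGen.head_induction_on with
  | refl =>
    intro Θ c hc
    have : Function.update Θ c (.some V₁) = Θ := by rw [← hc, Function.update_eq_self]
    rw [this]
  | head hstep hrest ih =>
    intro Θ c hc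
    refine ReflTransGen.head (Step.casB Θ c S hc hstep) ?_
    have h2 := ih (Function.update Θ c (.some _)) c (Function.update_self _ _ _)
    rwa [Function.update_idem] at h2
section DeadSim
variable [NeZero n]

inductive Dead : Tm n → Prop where
  | fail : Dead (.cas (fun _ => .none) (.cst 0))
  | cons (θ : Fin n → Ob n) {t : Tm n} : Dead t → Dead (.cas θ t)

theorem dead_lift {t : Tm n} (h : Dead t) (d k : ℕ) : Dead (lift d k t) := by
  induction h with
  | fail =>
    simp only [lift, liftO]
    exact Dead.fail
  | cons θ hd ih =>
    simp only [lift]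
    exact Dead.cons _ ih

theorem dead_subst {t : Tm n} (h : Dead t) (u : Tm n) (k : ℕ) : Dead (subst u k t) := by
  induction h with
  | fail =>
    simp only [subst, substO]
    exact Dead.fail
  | cons θ hd ih =>
    simp only [subst]
    exact Dead.cons _ ih

mutual
inductive Sim : Tm n → Tm n → Prop where
  | var (i : ℕ) : Sim (.var i) (.var i)
  | cst (c : Fin n) : Sim (.cst c) (.cst c)
  | app {x X y Y : Tm n} : Sim x X → Sim y Y → Sim (.app x y) (.app X Y)
  | lam {x X : Tm n} : Sim x X → Sim (.lam x) (.lam X)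
  | cas {θ Θ : Fin n → Ob n} {s S : Tm n} :
      (∀ c, SimO (θ c) (Θ c)) → Sim s S → Sim (.cas θ s) (.cas Θ S)
inductive SimO : Ob n → Ob n → Prop where
  | dead {v : Tm n} : Dead v → SimO (.some v) .none
  | some {v V : Tm n} : Sim v V → SimO (.some v) (.some V)
end

end DeadSim
section DeadSim2
variable [NeZero n]

mutual
theorem sim_lift (d : ℕ) : ∀ (k : ℕ) {x X : Tm n}, Sim x X → Sim (lift d k x) (lift d k X)
  | k, _, _, .var i => by simp only [lift]; exact Sim.var _
  | k, _, _, .cst c => by simp only [lift]; exact Sim.cst _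
  | k, _, _, .app h1 h2 => by
    simp only [lift]; exact Sim.app (sim_lift d k h1) (sim_lift d k h2)
  | k, _, _, .lam h1 => by
    simp only [lift]; exact Sim.lam (sim_lift d (k+1) h1)
  | k, _, _, .cas hb hs => by
    simp only [lift]
    exact Sim.cas (fun c => simO_lift d k (hb c)) (sim_lift d k hs)
theorem simO_lift (d : ℕ) : ∀ (k : ℕ) {b B : Ob n}, SimO b B → SimO (liftO d k b) (liftO d k B)
  | k, _, _, .dead hd => by
    simp only [liftO]; exact SimO.dead (dead_lift hd d k)
  | k, _, _, .some h1 => by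
    simp only [liftO]; exact SimO.some (sim_lift d k h1)
end

end DeadSim2
section DeadSim3
variable [NeZero n]

theorem sim_liftB {θ Θ : Fin n → Ob n} (hb : ∀ c, SimO (θ c) (Θ c)) (c : Fin n) :
    SimO (liftB θ c) (liftB Θ c) := simO_lift 1 0 (hb c)

mutual
theorem sim_subst {u U : Tm n} (hu : Sim u U) :
    ∀ (k : ℕ) {x X : Tm n}, Sim x X → Sim (subst u k x) (subst U k X)
  | k, _, _, .var i => by
    simp only [subst]
    by_cases h1 : i < k
    · simp only [if_pos h1]; exact Sim.var _
    · simp only [if_neg h1]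
      by_cases h2 : i = k
      · simp only [if_pos h2]; exact sim_lift k 0 hu
      · simp only [if_neg h2]; exact Sim.var _
  | k, _, _, .cst c => by simp only [subst]; exact Sim.cst _
  | k, _, _, .app h1 h2 => by
    simp only [subst]; exact Sim.app (sim_subst hu k h1) (sim_subst hu k h2)
  | k, _, _, .lam h1 => by
    simp only [subst]; exact Sim.lam (sim_subst hu (k+1) h1)
  | k, _, _, .cas hb hs => by
    simp only [subst]
    exact Sim.cas (fun c => simO_subst hu k (hb c)) (sim_subst hu k hs)
theorem simO_subst {u U : Tm n} (hu : Sim u U) :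
    ∀ (k : ℕ) {b B : Ob n}, SimO b B → SimO (substO u k b) (substO U k B)
  | k, _, _, .dead hd => by
    simp only [substO]; exact SimO.dead (dead_subst hd u k)
  | k, _, _, .some h1 => by
    simp only [substO]; exact SimO.some (sim_subst hu k h1)
end

mutual
theorem sim_cpl : ∀ (t : Tm n), Sim (cpl t) t
  | .var i => by simp only [cpl]; exact Sim.var _
  | .cst c => by simp only [cpl]; exact Sim.cst _
  | .app t u => by simp only [cpl]; exact Sim.app (sim_cpl t) (sim_cpl u)
  | .lam t => by simp only [cpl]; exact Sim.lam (sim_cpl t)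
  | .cas θ t => by
    simp only [cpl]
    exact Sim.cas (fun c => simO_cpl (θ c)) (sim_cpl t)
theorem simO_cpl : ∀ (b : Ob n), SimO (.some (cplO b)) b
  | .none => by
    simp only [cplO]
    exact SimO.dead (by rw [failTm]; exact Dead.fail)
  | .some v => by simp only [cplO]; exact SimO.some (sim_cpl v)
end

end DeadSim3
theorem lift_eq_cst {d k : ℕ} {c : Fin n} : ∀ {t : Tm n}, lift d k t = .cst c → t = .cst c
  | .var i, h => by simp only [lift] at h; cases h
  | .app _ _, h => by simp only [lift] at h; cases h
  | .lam _, h => by simp only [lift] at h; cases h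
  | .cst c', h => by simpa only [lift] using h
  | .cas _ _, h => by simp only [lift] at h; cases h

theorem liftO_eq_none {d k : ℕ} : ∀ {b : Ob n}, liftO d k b = .none → b = .none
  | .none, _ => rfl
  | .some _, h => by simp only [liftO] at h; cases h

theorem liftO_eq_some {d k : ℕ} {w : Tm n} :
    ∀ {b : Ob n}, liftO d k b = .some w → ∃ v, b = .some v ∧ w = lift d k v
  | .none, h => by simp only [liftO] at h; cases h
  | .some v, h => by
    simp only [liftO, Ob.some.injEq] at h
    exact ⟨v, rfl, h.symm⟩

section DeadSim4
variable [NeZero n]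

theorem dead_cas_inv {θ : Fin n → Ob n} {s : Tm n} (h : Dead (.cas θ s)) :
    (θ = (fun _ => Ob.none) ∧ s = .cst 0) ∨ Dead s := by
  cases h with
  | fail => exact Or.inl ⟨rfl, rfl⟩
  | cons _ hd => exact Or.inr hd

theorem dead_lift_rev {d k : ℕ} : ∀ {v : Tm n}, Dead (lift d k v) → Dead v
  | .var i, h => by simp only [lift] at h; cases h
  | .app _ _, h => by simp only [lift] at h; cases h
  | .lam _, h => by simp only [lift] at h; cases h
  | .cst _, h => by simp only [lift] at h; cases h
  | .cas θ t, h => by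
    simp only [lift] at h
    rcases dead_cas_inv h with ⟨hθ, hs⟩ | hd
    · have hθ' : θ = fun _ => Ob.none := funext fun c => liftO_eq_none (congrFun hθ c)
      have ht' : t = .cst 0 := lift_eq_cst hs
      subst hθ'; subst ht'
      exact Dead.fail
    · exact Dead.cons _ (dead_lift_rev hd)

end DeadSim4
section DeadSim5
variable [NeZero n]

mutual
theorem sim_lift_rev (d : ℕ) :
    ∀ (k : ℕ) (s : Tm n) {X : Tm n}, Sim (lift d k s) X → ∃ S, X = lift d k S ∧ Sim s S
  | k, .var i, X, hx => by
    simp only [lift] at hx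
    cases hx
    exact ⟨.var i, by simp only [lift], Sim.var i⟩
  | k, .cst c, X, hx => by
    simp only [lift] at hx
    cases hx
    exact ⟨.cst c, by simp only [lift], Sim.cst c⟩
  | k, .app a b, X, hx => by
    simp only [lift] at hx
    cases hx with
    | app h1 h2 =>
      obtain ⟨A, rfl, hA⟩ := sim_lift_rev d k a h1
      obtain ⟨B, rfl, hB⟩ := sim_lift_rev d k b h2
      exact ⟨.app A B, by simp only [lift], Sim.app hA hB⟩
  | k, .lam a, X, hx => by
    simp only [lift] at hx
    cases hx with
    | lam h1 =>
      obtain ⟨A, rfl, hA⟩ := sim_lift_rev d (k+1) a h1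
      exact ⟨.lam A, by simp only [lift], Sim.lam hA⟩
  | k, .cas θ s, X, hx => by
    simp only [lift] at hx
    cases hx with
    | cas hb hs =>
      obtain ⟨S, rfl, hS⟩ := sim_lift_rev d k s hs
      choose Θ₀ h1 h2 using fun c => simO_lift_rev d k (θ c) (hb c)
      refine ⟨.cas Θ₀ S, ?_, Sim.cas h2 hS⟩
      simp only [lift]
      congr 1
      exact funext fun c => h1 c
theorem simO_lift_rev (d : ℕ) :
    ∀ (k : ℕ) (b : Ob n) {B : Ob n}, SimO (liftO d k b) B → ∃ B₀, B = liftO d k B₀ ∧ SimO b B₀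
  | k, .none, B, hx => by simp only [liftO] at hx; cases hx
  | k, .some w, B, hx => by
    simp only [liftO] at hx
    cases hx with
    | dead hd => exact ⟨.none, rfl, SimO.dead (dead_lift_rev hd)⟩
    | some h1 =>
      obtain ⟨W, rfl, hW⟩ := sim_lift_rev d k w h1
      exact ⟨.some W, rfl, SimO.some hW⟩
end

theorem dead_step {x x' : Tm n} (h : Step x x') (hd : Dead x) : Dead x' := by
  induction h with
  | appLam t u => cases hd
  | lamApp t => cases hd
  | appL u _ ih => cases hd
  | appR t _ ih => cases hd
  | lamC _ ih => cases hd
  | caseCons θ c u hc =>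
    rcases dead_cas_inv hd with ⟨hθ, hs⟩ | hd2
    · rw [hθ] at hc; cases hc
    · cases hd2
  | caseApp θ t u =>
    rcases dead_cas_inv hd with ⟨hθ, hs⟩ | hd2
    · cases hs
    · cases hd2
  | caseLam θ t =>
    rcases dead_cas_inv hd with ⟨hθ, hs⟩ | hd2
    · cases hs
    · cases hd2
  | caseCase θ φ t =>
    rcases dead_cas_inv hd with ⟨hθ, hs⟩ | hd2
    · cases hs
    · rcases dead_cas_inv hd2 with ⟨hφ, hs⟩ | hd3
      · subst hφ; subst hs
        have : compB θ (fun _ => Ob.none) = fun _ => Ob.none := by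
          funext c; simp only [compB, casO]
        rw [this]
        exact Dead.fail
      · exact Dead.cons _ hd3
  | casT θ hstep ih =>
    rcases dead_cas_inv hd with ⟨hθ, hs⟩ | hd2
    · subst hs; cases hstep
    · exact Dead.cons _ (ih hd2)
  | casB θ c t hc _ ih =>
    rcases dead_cas_inv hd with ⟨hθ, hs⟩ | hd2
    · rw [hθ] at hc; cases hc
    · exact Dead.cons _ hd2

theorem dead_is_cas {t : Tm n} (h : Dead t) : ∃ φ r, t = .cas φ r := by
  cases h with
  | fail => exact ⟨_, _, rfl⟩
  | cons θ hd => exact ⟨_, _, rfl⟩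

theorem dead_nf {v : Tm n} (hd : Dead v) (hnf : ∀ w, ¬ StepCC v w) : v = failTm := by
  cases hd with
  | fail => rfl
  | cons θ hd2 =>
    exfalso
    obtain ⟨φ, r, rfl⟩ := dead_is_cas hd2
    exact hnf _ (StepCC.caseCase θ φ r)
theorem simO_inv {b B : Ob n} (h : SimO b B) :
    ∃ v, b = .some v ∧ ((B = .none ∧ Dead v) ∨ ∃ V, B = .some V ∧ Sim v V) := by
  cases h with
  | dead hd => exact ⟨_, rfl, Or.inl ⟨rfl, hd⟩⟩
  | some h1 => exact ⟨_, rfl, Or.inr ⟨_, rfl, h1⟩⟩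

theorem sim_step : ∀ {x x' T : Tm n}, Step x x' → Sim x T → Defined T →
    ∃ T₁, ReflTransGen Step T T₁ ∧ Sim x' T₁ := by
  intro x x' T h
  induction h generalizing T with
  | appLam t u =>
    intro hx hT
    cases hx with
    | app h1 h2 =>
      cases h1 with
      | lam h3 =>
        exact ⟨_, ReflTransGen.single (Step.appLam _ _), sim_subst h2 0 h3⟩
  | lamApp t =>
    intro hx hT
    cases hx with
    | lam h1 =>
      cases h1 with
      | app h2 h3 =>
        cases h3
        obtain ⟨S, rfl, hS⟩ := sim_lift_rev 1 0 t h2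
        exact ⟨S, ReflTransGen.single (Step.lamApp S), hS⟩
  | caseCons θ c u hc =>
    intro hx hT
    cases hx with
    | cas hb hs =>
      cases hs
      have h2 := hb c
      rw [hc] at h2
      obtain ⟨u₂, he, hrest⟩ := simO_inv h2
      injection he with he'
      subst he'
      rcases hrest with ⟨hnone, hdu⟩ | ⟨U, hsome, hsim⟩
      · cases hT with
        | cas hbd hS hcst => exact absurd hnone (hcst c rfl)
      · exact ⟨U, ReflTransGen.single (Step.caseCons _ c U hsome), hsim⟩
  | caseApp θ t u =>
    intro hx hT
    cases hx with
    | cas hb hs =>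
      cases hs with
      | app h1 h2 =>
        exact ⟨_, ReflTransGen.single (Step.caseApp _ _ _), Sim.app (Sim.cas hb h1) h2⟩
  | caseLam θ t =>
    intro hx hT
    cases hx with
    | cas hb hs =>
      cases hs with
      | lam h1 =>
        exact ⟨_, ReflTransGen.single (Step.caseLam _ _), Sim.lam (Sim.cas (sim_liftB hb) h1)⟩
  | caseCase θ φ t =>
    intro hx hT
    cases hx with
    | cas hb hs =>
      cases hs with
      | cas hφ hR =>
        refine ⟨_, ReflTransGen.single (Step.caseCase _ _ _), Sim.cas ?_ hR⟩
        intro c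
        obtain ⟨v, hv, hrest⟩ := simO_inv (hφ c)
        rcases hrest with ⟨hnone, hdv⟩ | ⟨V, hsome, hsim⟩
        · simp only [compB, hv, hnone, casO]
          exact SimO.dead (Dead.cons _ hdv)
        · simp only [compB, hv, hsome, casO]
          exact SimO.some (Sim.cas hb hsim)
  | appL u hstep ih =>
    intro hx hT
    cases hx with
    | app h1 h2 =>
      cases hT with
      | app hP hQ =>
        obtain ⟨P₁, hr, hs1⟩ := ih h1 hP
        exact ⟨_, star_appL _ hr, Sim.app hs1 h2⟩
  | appR t hstep ih =>
    intro hx hT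
    cases hx with
    | app h1 h2 =>
      cases hT with
      | app hP hQ =>
        obtain ⟨Q₁, hr, hs2⟩ := ih h2 hQ
        exact ⟨_, star_appR _ hr, Sim.app h1 hs2⟩
  | lamC hstep ih =>
    intro hx hT
    cases hx with
    | lam h1 =>
      cases hT with
      | lam hP =>
        obtain ⟨P₁, hr, hs1⟩ := ih h1 hP
        exact ⟨_, star_lam hr, Sim.lam hs1⟩
  | casT θ hstep ih =>
    intro hx hT
    cases hx with
    | cas hb hs =>
      cases hT with
      | cas hbd hS hcst =>
        obtain ⟨S₁, hr, hs1⟩ := ih hs hS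
        exact ⟨_, star_casT _ hr, Sim.cas hb hs1⟩
  | casB θ c t hc hstep ih =>
    intro hx hT
    cases hx with
    | cas hb hs =>
      have h2 := hb c
      rw [hc] at h2
      obtain ⟨u₂, he, hrest⟩ := simO_inv h2
      injection he with he'
      subst he'
      rcases hrest with ⟨hnone, hdu⟩ | ⟨U, hsome, hsim⟩
      · refine ⟨_, ReflTransGen.refl, Sim.cas ?_ hs⟩
        intro c'
        by_cases hcc : c' = c
        · subst hcc
          rw [Function.update_self, hnone]
          exact SimO.dead (dead_step hstep hdu)
        · rw [Function.update_of_ne hcc]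
          exact hb c'
      · cases hT with
        | cas hbd hS hcst =>
          obtain ⟨U₁, hr, hsim₁⟩ := ih hsim (hbd c U hsome)
          refine ⟨_, steps_casB _ hr _ c hsome, Sim.cas ?_ hs⟩
          intro c'
          by_cases hcc : c' = c
          · subst hcc
            rw [Function.update_self, Function.update_self]
            exact SimO.some hsim₁
          · rw [Function.update_of_ne hcc, Function.update_of_ne hcc]
            exact hb c'
theorem sim_star : ∀ {x x' T : Tm n}, ReflTransGen Step x x' → Sim x T → HD T →
    ∃ T₁, ReflTransGen Step T T₁ ∧ Sim x' T₁ := by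
  intro x x' T h
  induction h using Relation.ReflTransGen.head_induction_on generalizing T with
  | refl => exact fun hx _ => ⟨T, ReflTransGen.refl, hx⟩
  | head hstep hrest ih =>
    intro hx hT
    obtain ⟨T₁, hr1, hs1⟩ := sim_step hstep hx (hT T ReflTransGen.refl)
    obtain ⟨T₂, hr2, hs2⟩ := ih hs1 (fun u hu => hT u (hr1.trans hu))
    exact ⟨T₂, hr1.trans hr2, hs2⟩

theorem steps_cas_all {Θ₁ : Fin n → Ob n} (S : Tm n) :
    ∀ (s : Finset (Fin n)) (Θ : Fin n → Ob n), (∀ c ∉ s, Θ c = Θ₁ c) →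
    (∀ c, Θ c = Θ₁ c ∨ ∃ V V₁, Θ c = .some V ∧ Θ₁ c = .some V₁ ∧ ReflTransGen Step V V₁) →
    ReflTransGen Step (.cas Θ S) (.cas Θ₁ S) := by
  intro s
  induction s using Finset.induction_on with
  | empty =>
    intro Θ hout _
    have : Θ = Θ₁ := funext fun c => hout c (Finset.notMem_empty c)
    rw [this]
  | insert a s' hx ih =>
    intro Θ hout hcond
    have step1 : ReflTransGen Step (.cas Θ S) (.cas (Function.update Θ a (Θ₁ a)) S) := by
      rcases hcond a with heq | ⟨V, V₁, hV, hV₁, hr⟩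
      · rw [← heq, Function.update_eq_self]
      · rw [hV₁]
        exact steps_casB S hr Θ a hV
    refine step1.trans (ih (Function.update Θ a (Θ₁ a)) ?_ ?_)
    · intro c hc
      by_cases hca : c = a
      · subst hca; rw [Function.update_self]
      · rw [Function.update_of_ne hca]
        exact hout c (by simp [hca, hc])
    · intro c
      by_cases hca : c = a
      · subst hca; rw [Function.update_self]; exact Or.inl rfl
      · rw [Function.update_of_ne hca]
        exact hcond c
mutual
theorem sim_nf : ∀ (x : Tm n) {T : Tm n}, Sim x T → (∀ v, ¬ StepCC x v) →
    ∃ T₁, ReflTransGen Step T T₁ ∧ x = cpl T₁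
  | .var i, T, hx, _ => by
    cases hx
    exact ⟨.var i, ReflTransGen.refl, by simp [cpl]⟩
  | .cst c, T, hx, _ => by
    cases hx
    exact ⟨.cst c, ReflTransGen.refl, by simp [cpl]⟩
  | .app a b, T, hx, hnf => by
    cases hx with
    | app h1 h2 =>
      obtain ⟨A₁, hrA, heA⟩ := sim_nf a h1 (fun v hv => hnf _ (StepCC.appL _ hv))
      obtain ⟨B₁, hrB, heB⟩ := sim_nf b h2 (fun v hv => hnf _ (StepCC.appR _ hv))
      exact ⟨.app A₁ B₁, (star_appL _ hrA).trans (star_appR _ hrB),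
        by rw [heA, heB]; simp [cpl]⟩
  | .lam a, T, hx, hnf => by
    cases hx with
    | lam h1 =>
      obtain ⟨A₁, hrA, heA⟩ := sim_nf a h1 (fun v hv => hnf _ (StepCC.lamC hv))
      exact ⟨.lam A₁, star_lam hrA, by rw [heA]; simp [cpl]⟩
  | .cas θ s, T, hx, hnf => by
    cases hx with
    | cas hb hs =>
      obtain ⟨S₁, hrS, heS⟩ := sim_nf s hs (fun v hv => hnf _ (StepCC.casT _ hv))
      have hB := fun c => simO_nf (θ c) (hb c) (fun w v hw hv => hnf _ (StepCC.casB θ c s hw hv))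
      choose Θ₁ h1 h2 using hB
      refine ⟨.cas Θ₁ S₁, ?_, ?_⟩
      · exact (star_casT _ hrS).trans (steps_cas_all S₁ Finset.univ _ (by simp) h1)
      · simp only [cpl]
        rw [← heS]
        congr 1
        exact funext fun c => h2 c
theorem simO_nf : ∀ (b : Ob n) {B : Ob n}, SimO b B →
    (∀ w v, b = .some w → ¬ StepCC w v) →
    ∃ B₁, (B = B₁ ∨ ∃ V V₁, B = .some V ∧ B₁ = .some V₁ ∧ ReflTransGen Step V V₁) ∧
      b = .some (cplO B₁)
  | .none, B, hx, _ => by cases hx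
  | .some w, B, hx, hnf => by
    cases hx with
    | dead hd =>
      have hw := dead_nf hd (fun v hv => hnf w v rfl hv)
      exact ⟨.none, Or.inl rfl, by rw [hw]; rfl⟩
    | some h1 =>
      obtain ⟨V₁, hr, he⟩ := sim_nf w h1 (fun v hv => hnf w v rfl hv)
      exact ⟨.some V₁, Or.inr ⟨_, _, rfl, rfl, hr⟩, by rw [he]; rfl⟩
end

end DeadSim5

/-- If `t` is hereditarily defined and `⌈t⌉ →* t'`, then the CaseCase normal
form of `t'` is `⌈t₀⌉` for some `t₀` with `t →* t₀`. -/
theorem cpl_red_hd {n : ℕ} [NeZero n] {t t' a : Tm n} (ht : HD t)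
    (h : Relation.ReflTransGen Step (cpl t) t')
    (ha : Relation.ReflTransGen StepCC t' a) (hna : ∀ v, ¬ StepCC a v) :
    ∃ t₀ : Tm n, a = cpl t₀ ∧ Relation.ReflTransGen Step t t₀ := by
  have h2 : Relation.ReflTransGen Step (cpl t) a :=
    h.trans (ha.lift id (fun _ _ hs => stepCC_step hs))
  obtain ⟨T₁, hr, hsim⟩ := sim_star h2 (sim_cpl t) ht
  obtain ⟨T₂, hr₂, he⟩ := sim_nf a hsim hna
  exact ⟨T₂, he, hr.trans hr₂⟩
end LC
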